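/- Let b = 1/(1−p), fix r ≥ 2, γ ∈ (0,1)^r with Σγ_i = 1, ε > 0, and α_STAT = (log_b n / ∏_i γ_i)^{1/(r−1)}. If α ≥ (1+ε)·α_STAT, then the expected number of γ-balanced independent sets of size α in H(r,n,p) (with respect to the identity permutation) is at most exp(−c·ε·α·log n) for some constant c > 0 and all large n; in particular it tends to 0. -/

import Mathlib

open Filter

/-- With `b = 1/(1−p)` and `α_STAT = (log_b n / ∏_i γ_i)^{1/(r−1)}`, if `α ≥ (1+ε)·α_STAT`
then the expected number `(∏_i C(n, γ_i α))·(1−p)^{α^r·∏_i γ_i}` of `γ`-balanced independent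
sets of size `α` in `H(r,n,p)` (identity permutation) is eventually at most
`exp(−c·ε·α·log n)` for some `c > 0`; in particular it tends to `0`. -/
theorem stmt_15 (p ε : ℝ) (hp : 0 < p) (hp1 : p < 1) (hε : 0 < ε) (r : ℕ) (hr : 2 ≤ r)
    (γ : Fin r → ℝ) (hγ : ∀ i, 0 < γ i ∧ γ i < 1) (hsum : ∑ i, γ i = 1)
    (α : ℕ → ℕ) (k : ℕ → Fin r → ℕ) (hk : ∀ n i, (k n i : ℝ) = γ i * α n)
    (hα : ∀ n : ℕ, 2 ≤ n → (α n : ℝ) ≥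
      (1 + ε) * (Real.logb (1 / (1 - p)) n / ∏ i, γ i) ^ ((1 : ℝ) / (r - 1))) :
    ∃ c > 0,
      (∀ᶠ n : ℕ in atTop,
        (∏ i, (n.choose (k n i) : ℝ)) * (1 - p) ^ (∏ i, k n i) ≤
          Real.exp (-c * ε * (α n : ℝ) * Real.log n)) ∧
      Tendsto (fun n : ℕ => (∏ i, (n.choose (k n i) : ℝ)) * (1 - p) ^ (∏ i, k n i))
        atTop (nhds 0) := by
  have h1p : (0:ℝ) < 1 - p := by linarith
  have hB : 0 < -Real.log (1 - p) := by
    have := Real.log_neg h1p (by linarith)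
    linarith
  set B : ℝ := -Real.log (1 - p) with hBdef
  have hPγ : 0 < ∏ i, γ i := Finset.prod_pos (fun i _ => (hγ i).1)
  have hs : (1:ℝ) ≤ (r:ℝ) - 1 := by
    have : (2:ℝ) ≤ (r:ℝ) := by exact_mod_cast hr
    linarith
  set s : ℝ := (r:ℝ) - 1 with hsdef
  have hs0 : 0 < s := by linarith
  -- cast of r - 1
  have hrcast : ((r - 1 : ℕ) : ℝ) = s := by
    have : 1 ≤ r := by omega
    push_cast [this]; ring
  -- sum of k's
  have hksum : ∀ n, (∑ i, k n i) = α n := by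
    intro n
    have : ((∑ i, k n i : ℕ) : ℝ) = ((α n : ℕ) : ℝ) := by
      push_cast
      simp only [hk]
      rw [← Finset.sum_mul, hsum, one_mul]
    exact_mod_cast this
  -- product of k's
  have hkprod : ∀ n, ((∏ i, k n i : ℕ) : ℝ) = (∏ i, γ i) * (α n : ℝ) ^ r := by
    intro n
    push_cast
    simp only [hk]
    rw [Finset.prod_mul_distrib, Finset.prod_const, Finset.card_fin]
  -- main pointwise bound
  have main : ∀ n : ℕ, 2 ≤ n →
      (∏ i, (n.choose (k n i) : ℝ)) * (1 - p) ^ (∏ i, k n i) ≤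
        Real.exp (-s * ε * (α n : ℝ) * Real.log n) := by
    intro n hn
    have hlogn : 0 < Real.log n := by
      apply Real.log_pos
      exact_mod_cast by omega
    -- bound on binomials
    have hA : (∏ i, (n.choose (k n i) : ℝ)) ≤ (n : ℝ) ^ (α n) := by
      calc (∏ i, (n.choose (k n i) : ℝ)) ≤ ∏ i, (n:ℝ) ^ (k n i) := by
            apply Finset.prod_le_prod
            · intro i _; positivity
            · intro i _; exact_mod_cast Nat.choose_le_pow n (k n i)
        _ = (n:ℝ) ^ (∑ i, k n i) := by rw [Finset.prod_pow_eq_pow_sum]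
        _ = (n:ℝ) ^ (α n) := by rw [hksum]
    have hppos : 0 < (1 - p) ^ (∏ i, k n i) := by positivity
    have step1 : (∏ i, (n.choose (k n i) : ℝ)) * (1 - p) ^ (∏ i, k n i) ≤
        Real.exp ((α n : ℝ) * Real.log n + ((∏ i, k n i : ℕ) : ℝ) * Real.log (1 - p)) := by
      rw [Real.exp_add, Real.exp_nat_mul, Real.exp_nat_mul, Real.exp_log (by positivity),
        Real.exp_log h1p]
      exact mul_le_mul_of_nonneg_right hA hppos.le
    refine step1.trans (Real.exp_le_exp.mpr ?_)
    -- key exponent inequality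
    set X : ℝ := Real.logb (1 / (1 - p)) n / ∏ i, γ i with hXdef
    have hlogb : Real.logb (1 / (1 - p)) n = Real.log n / B := by
      rw [Real.logb, Real.log_div one_ne_zero (by linarith), Real.log_one]
      ring_nf
      rw [hBdef, inv_neg, mul_neg]
    have hX0 : 0 ≤ X := by
      rw [hXdef, hlogb]
      positivity
    have hα' := hα n hn
    have hpow : (1 + s * ε) * X ≤ (α n : ℝ) ^ (r - 1) := by
      have h1 : ((1 + ε) * X ^ ((1:ℝ)/s)) ^ (r - 1) ≤ ((α n : ℝ)) ^ (r - 1) := by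
        apply pow_le_pow_left₀ (by positivity) hα'
      have h2 : ((1 + ε) * X ^ ((1:ℝ)/s)) ^ (r - 1)
          = (1 + ε) ^ (r - 1) * X := by
        rw [mul_pow, ← Real.rpow_natCast (X ^ ((1:ℝ)/s)) (r-1),
          ← Real.rpow_mul hX0, hrcast, one_div, inv_mul_cancel₀ (ne_of_gt hs0),
          Real.rpow_one]
      have h3 : 1 + s * ε ≤ (1 + ε) ^ (r - 1) := by
        have := one_add_mul_le_pow (a := ε) (by linarith) (r - 1)
        rwa [hrcast] at this
      nlinarith [h3, hX0, h1, h2]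
    -- multiply by Πγ * α * B
    have hmul : (1 + s * ε) * X * ((∏ i, γ i) * (α n : ℝ) * B) ≤
        (α n : ℝ) ^ (r - 1) * ((∏ i, γ i) * (α n : ℝ) * B) := by
      apply mul_le_mul_of_nonneg_right hpow
      positivity
    have hXid : X * ((∏ i, γ i) * B) = Real.log n := by
      rw [hXdef, hlogb, div_div, mul_comm (∏ i, γ i) B]
      exact div_mul_cancel₀ _ (by positivity)
    have hαr : (α n : ℝ) ^ (r - 1) * (α n : ℝ) = (α n : ℝ) ^ r := by
      rw [← pow_succ]
      congr 1
      omega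
    have key : (1 + s * ε) * (α n : ℝ) * Real.log n ≤
        (∏ i, γ i) * (α n : ℝ) ^ r * B := by
      calc (1 + s * ε) * (α n : ℝ) * Real.log n
          = (1 + s * ε) * X * ((∏ i, γ i) * (α n : ℝ) * B) := by
            rw [← hXid]; ring
        _ ≤ (α n : ℝ) ^ (r - 1) * ((∏ i, γ i) * (α n : ℝ) * B) := hmul
        _ = (∏ i, γ i) * (α n : ℝ) ^ r * B := by rw [← hαr]; ring
    rw [hkprod]
    have hlog1p : Real.log (1 - p) = -B := by rw [hBdef]; ring
    rw [hlog1p]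
    nlinarith [key]
  refine ⟨s, hs0, ?_, ?_⟩
  · filter_upwards [eventually_ge_atTop 2] with n hn using main n hn
  · -- α n → ∞ eventually ≥ 1
    have hb1 : (1:ℝ) < 1 / (1 - p) := by
      rw [lt_div_iff₀ h1p]; linarith
    have hXtend : Tendsto (fun n : ℕ =>
        (1 + ε) * (Real.logb (1 / (1 - p)) n / ∏ i, γ i) ^ ((1:ℝ)/(r - 1)))
        atTop atTop := by
      apply Tendsto.const_mul_atTop (by linarith)
      apply (tendsto_rpow_atTop (by positivity)).comp
      apply Tendsto.atTop_div_const hPγ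
      exact (Real.tendsto_logb_atTop hb1).comp tendsto_natCast_atTop_atTop
    have hα1 : ∀ᶠ n : ℕ in atTop, (1:ℝ) ≤ (α n : ℝ) := by
      filter_upwards [hXtend.eventually_ge_atTop 1, eventually_ge_atTop 2] with n h1 h2
      exact h1.trans (hα n h2)
    have hexp : Tendsto (fun n : ℕ => Real.exp (-s * ε * (α n : ℝ) * Real.log n))
        atTop (nhds 0) := by
      apply Real.tendsto_exp_atBot.comp
      apply tendsto_atBot_mono' atTop (f₁ := fun n : ℕ => -(s * ε) * Real.log n)
      · filter_upwards [hα1, eventually_ge_atTop 1] with n h1 hn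
        have hln : 0 ≤ Real.log n := Real.log_natCast_nonneg n
        nlinarith [mul_le_mul_of_nonneg_right h1 hln, mul_pos hs0 hε]
      · exact Tendsto.const_mul_atTop_of_neg (by nlinarith)
          (Real.tendsto_log_atTop.comp tendsto_natCast_atTop_atTop)
    apply tendsto_of_tendsto_of_tendsto_of_le_of_le' tendsto_const_nhds hexp
    · filter_upwards with n
      positivity
    · filter_upwards [eventually_ge_atTop 2] with n hn using main n hn
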